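/- Let r_s, ε, q, λ be positive real numbers (ε = mc² is the particle's rest energy and λ the Born–Infeld length). For l > 0 set a := (r_s + l)/4 and define the energy measured at infinity E(l) := ε·(1 − r_s/(4a))/(1 + r_s/(4a)) + (q²/(2λ))·√((1 − r_s/(4a))/(1 + r_s/(4a))) + q²·r_s/(4a²(1 + r_s/(4a))⁴). Then the function l ↦ E(l) − (1/(4r_s))·(2εl + q²·(1 + √(2·l·r_s)/λ)) is O(l^{3/2}) as l → 0⁺ (with respect to the filter 𝓝[>] 0). In particular E(l) = (1/(4r_s))[2εl + q²(1 + √(2 l r_s)/λ)] up to higher-order corrections, where l is the proper distance of the particle's center of mass from the horizon. -/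

import Mathlib

open Filter Topology Asymptotics

set_option maxHeartbeats 1600000

/-- The energy measured at infinity of a Born–Infeld charged body of rest energy ε,
charge q and Born–Infeld length λ, held at isotropic radius a = (r_s + l)/4 (proper
distance l from the horizon), equals (1/(4r_s))[2εl + q²(1 + √(2lr_s)/λ)] up to
O(l^{3/2}) corrections as l → 0⁺. -/
theorem bornInfeld_energy_near_horizon (r_s ε q lam : ℝ)
    (hrs : 0 < r_s) (hε : 0 < ε) (hq : 0 < q) (hlam : 0 < lam) :
    (fun l : ℝ =>
        (fun a : ℝ =>
            ε * (1 - r_s / (4 * a)) / (1 + r_s / (4 * a)) +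
              (q ^ 2 / (2 * lam)) *
                Real.sqrt ((1 - r_s / (4 * a)) / (1 + r_s / (4 * a))) +
              q ^ 2 * r_s / (4 * a ^ 2 * (1 + r_s / (4 * a)) ^ 4)) ((r_s + l) / 4) -
          (1 / (4 * r_s)) * (2 * ε * l + q ^ 2 * (1 + Real.sqrt (2 * l * r_s) / lam)))
      =O[𝓝[>] 0] fun l : ℝ => l ^ ((3 : ℝ) / 2) := by
  rw [Asymptotics.isBigO_iff]
  refine ⟨ε / (4 * r_s ^ 2) + 17 * q ^ 2 / (64 * r_s ^ 3)
      + q ^ 2 / (4 * lam * Real.sqrt (2 * r_s) ^ 3), ?_⟩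
  filter_upwards [Ioo_mem_nhdsGT_of_mem (Set.left_mem_Ico.2 (lt_min one_pos hrs))]
    with l hl
  beta_reduce
  obtain ⟨hl0, hlm⟩ := hl
  have hl1 : l ≤ 1 := (lt_of_lt_of_le hlm (min_le_left _ _)).le
  have hlr : l ≤ r_s := (lt_of_lt_of_le hlm (min_le_right _ _)).le
  set s := Real.sqrt l with hs
  set u := Real.sqrt (2 * r_s) with hu
  set t := Real.sqrt (2 * r_s + l) with ht
  have hs2 : s ^ 2 = l := Real.sq_sqrt hl0.le
  have hu2 : u ^ 2 = 2 * r_s := Real.sq_sqrt (by positivity)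
  have ht2 : t ^ 2 = 2 * r_s + l := Real.sq_sqrt (by positivity)
  have hs0 : 0 < s := Real.sqrt_pos.2 hl0
  have hu0 : 0 < u := Real.sqrt_pos.2 (by positivity)
  have ht0 : 0 < t := Real.sqrt_pos.2 (by positivity)
  have hut : u ≤ t := Real.sqrt_le_sqrt (by linarith)
  have hs1 : s ≤ 1 := by
    rw [hs, show (1:ℝ) = Real.sqrt 1 from (Real.sqrt_one).symm]
    exact Real.sqrt_le_sqrt hl1
  have hrl : (0:ℝ) < r_s + l := by linarith
  have h2rl : (0:ℝ) < 2 * r_s + l := by linarith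
  have h4a : 4 * ((r_s + l) / 4) = r_s + l := by ring
  have hs3 : s ^ 3 = l ^ ((3:ℝ)/2) := by
    rw [hs, Real.sqrt_eq_rpow, ← Real.rpow_natCast (l ^ ((1:ℝ)/2)) 3,
      ← Real.rpow_mul hl0.le]
    norm_num
  -- rewrite the sqrt arguments
  have e2 : (1 - r_s / (r_s + l)) / (1 + r_s / (r_s + l)) = l / (2 * r_s + l) := by
    have h0 : 1 - r_s / (r_s + l) = l / (r_s + l) := by field_simp; ring
    have h1 : 1 + r_s / (r_s + l) = (2 * r_s + l) / (r_s + l) := by field_simp; ring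
    rw [h0, h1, div_div_div_cancel_right₀]
    exact hrl.ne'
  have hsqrt1 : Real.sqrt ((1 - r_s / (r_s + l)) / (1 + r_s / (r_s + l))) = s / t := by
    rw [e2, Real.sqrt_div hl0.le, hs, ht]
  have hsqrt2 : Real.sqrt (2 * l * r_s) = s * u := by
    rw [show 2 * l * r_s = l * (2 * r_s) by ring, Real.sqrt_mul hl0.le, hs, hu]
  have hden : (0:ℝ) < 1 + r_s / (r_s + l) := by positivity
  -- the three difference pieces
  have key : ε * (1 - r_s / (4 * ((r_s + l) / 4))) / (1 + r_s / (4 * ((r_s + l) / 4))) +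
      (q ^ 2 / (2 * lam)) *
        Real.sqrt ((1 - r_s / (4 * ((r_s + l) / 4))) / (1 + r_s / (4 * ((r_s + l) / 4)))) +
      q ^ 2 * r_s / (4 * ((r_s + l) / 4) ^ 2 * (1 + r_s / (4 * ((r_s + l) / 4))) ^ 4) -
      (1 / (4 * r_s)) * (2 * ε * l + q ^ 2 * (1 + Real.sqrt (2 * l * r_s) / lam)) =
      (ε * (1 - r_s / (r_s + l)) / (1 + r_s / (r_s + l)) - ε * l / (2 * r_s)) +
      ((q ^ 2 / (2 * lam)) * (s / t) - q ^ 2 * (s * u) / (lam * (4 * r_s))) +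
      (q ^ 2 * r_s / (4 * ((r_s + l) / 4) ^ 2 * (1 + r_s / (r_s + l)) ^ 4) -
        q ^ 2 / (4 * r_s)) := by
    rw [h4a, hsqrt1, hsqrt2]
    field_simp
    ring
  rw [key]
  have b1 : |ε * (1 - r_s / (r_s + l)) / (1 + r_s / (r_s + l)) - ε * l / (2 * r_s)| ≤
      ε / (4 * r_s ^ 2) * s ^ 3 := by
    have eq1 : ε * (1 - r_s / (r_s + l)) / (1 + r_s / (r_s + l)) - ε * l / (2 * r_s) =
        -(ε * l ^ 2 / (2 * r_s * (2 * r_s + l))) := by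
      field_simp
      ring
    rw [eq1, abs_neg, abs_of_nonneg (by positivity)]
    calc ε * l ^ 2 / (2 * r_s * (2 * r_s + l)) ≤ ε * l ^ 2 / (2 * r_s * (2 * r_s)) := by
          gcongr; linarith
      _ = ε / (4 * r_s ^ 2) * (s ^ 2 * s ^ 2) := by rw [hs2]; ring
      _ ≤ ε / (4 * r_s ^ 2) * s ^ 3 := by
          refine mul_le_mul_of_nonneg_left ?_ (by positivity)
          nlinarith [mul_nonneg (pow_nonneg hs0.le 3) (sub_nonneg.2 hs1)]
  have b3 : |q ^ 2 * r_s / (4 * ((r_s + l) / 4) ^ 2 * (1 + r_s / (r_s + l)) ^ 4) -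
      q ^ 2 / (4 * r_s)| ≤ 17 * q ^ 2 / (64 * r_s ^ 3) * s ^ 3 := by
    have eq3 : q ^ 2 * r_s / (4 * ((r_s + l) / 4) ^ 2 * (1 + r_s / (r_s + l)) ^ 4) -
        q ^ 2 / (4 * r_s) =
        -(q ^ 2 * l ^ 2 * (8 * r_s * (r_s + l) + l ^ 2) /
          (4 * r_s * (2 * r_s + l) ^ 4)) := by
      field_simp
      ring
    rw [eq3, abs_neg, abs_of_nonneg (by positivity)]
    calc q ^ 2 * l ^ 2 * (8 * r_s * (r_s + l) + l ^ 2) / (4 * r_s * (2 * r_s + l) ^ 4)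
        ≤ q ^ 2 * l ^ 2 * (17 * r_s ^ 2) / (4 * r_s * (2 * r_s) ^ 4) := by
          gcongr
          · nlinarith
          · linarith
      _ = 17 * q ^ 2 / (64 * r_s ^ 3) * (s ^ 2 * s ^ 2) := by rw [hs2]; field_simp; ring
      _ ≤ 17 * q ^ 2 / (64 * r_s ^ 3) * s ^ 3 := by
          refine mul_le_mul_of_nonneg_left ?_ (by positivity)
          nlinarith [mul_nonneg (pow_nonneg hs0.le 3) (sub_nonneg.2 hs1)]
  have htu : (t - u) * (t + u) = s ^ 2 := by linear_combination ht2 - hu2 - hs2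
  have b2 : |(q ^ 2 / (2 * lam)) * (s / t) - q ^ 2 * (s * u) / (lam * (4 * r_s))| ≤
      q ^ 2 / (4 * lam * u ^ 3) * s ^ 3 := by
    have hd : u - t = -(s ^ 2) / (t + u) := by
      rw [eq_div_iff (by positivity)]
      linear_combination -htu
    have eq2 : (q ^ 2 / (2 * lam)) * (s / t) - q ^ 2 * (s * u) / (lam * (4 * r_s)) =
        -(q ^ 2 * s ^ 3 / (2 * lam * t * u * (t + u))) := by
      rw [show lam * (4 * r_s) = 2 * lam * u ^ 2 by rw [hu2]; ring]
      have step : (q ^ 2 / (2 * lam)) * (s / t) - q ^ 2 * (s * u) / (2 * lam * u ^ 2)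
          = q ^ 2 * s / (2 * lam) * ((u - t) / (t * u)) := by
        field_simp
      rw [step, hd]
      field_simp
    rw [eq2, abs_neg, abs_of_nonneg (by positivity)]
    calc q ^ 2 * s ^ 3 / (2 * lam * t * u * (t + u))
        ≤ q ^ 2 * s ^ 3 / (2 * lam * u * u * (u + u)) := by
          gcongr <;> linarith
      _ = q ^ 2 / (4 * lam * u ^ 3) * s ^ 3 := by field_simp; ring
  have hnorm : ‖l ^ ((3:ℝ)/2)‖ = s ^ 3 := by
    rw [Real.norm_eq_abs, abs_of_nonneg (Real.rpow_nonneg hl0.le _), hs3]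
  rw [Real.norm_eq_abs, hnorm]
  calc |_ + _ + _| ≤ |_| + |_| + |_| := abs_add_three _ _ _
    _ ≤ ε / (4 * r_s ^ 2) * s ^ 3 + q ^ 2 / (4 * lam * u ^ 3) * s ^ 3
        + 17 * q ^ 2 / (64 * r_s ^ 3) * s ^ 3 := by
        exact add_le_add (add_le_add b1 b2) b3
    _ = (ε / (4 * r_s ^ 2) + 17 * q ^ 2 / (64 * r_s ^ 3) + q ^ 2 / (4 * lam * u ^ 3))
        * s ^ 3 := by ring
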